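/- arXiv:2605.16287 — 4 statements merged into one kernel-verified Lean document; each statement's English description precedes it below -/
import Mathlib

section
/- Let λ ≠ 0 and β be real numbers, let m ≥ 1 be an integer, and let x be a real number with |λx| < 1 and 1 + λx > 0. Then Σ_{n=0}^∞ n^m (β)_{n,λ} x^n/n! = Σ_{k=1}^m S(m,k) x^k (β)_{k,λ} (1 + λx)^{β/λ − k}, the series on the left being absolutely convergent. -/
open Finset

/-- degenerate falling factorial `(β)_{k,lam}` -/
noncomputable def dff (β lam : ℝ) (k : ℕ) : ℝ := ∏ i ∈ Finset.range k, (β - i * lam)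

/-- Stirling numbers of the second kind -/
noncomputable def S2 (n k : ℕ) : ℝ :=
  iteratedDeriv n (fun z : ℝ => (Real.exp z - 1) ^ k) 0 / k.factorial

open Filter

lemma expsum_ideriv (s : Finset ℕ) (c : ℕ → ℝ) (m : ℕ) :
    iteratedDeriv m (fun z : ℝ => ∑ j ∈ s, c j * Real.exp (j * z)) =
      fun z => ∑ j ∈ s, c j * (j:ℝ)^m * Real.exp (j * z) := by
  induction m with
  | zero => simp [iteratedDeriv_zero]
  | succ m ih =>
    rw [iteratedDeriv_succ, ih]
    funext z
    have h : HasDerivAt (fun z => ∑ j ∈ s, c j * (j:ℝ)^m * Real.exp (j*z))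
        (∑ j ∈ s, c j * (j:ℝ)^(m+1) * Real.exp (j*z)) z := by
      apply HasDerivAt.fun_sum
      intro j hj
      have h1 : HasDerivAt (fun z:ℝ => (j:ℝ)*z) j z := by
        simpa using (hasDerivAt_id z).const_mul (j:ℝ)
      have h2 := (h1.exp).const_mul (c j * (j:ℝ)^m)
      refine h2.congr_deriv ?_
      ring
    exact h.deriv

lemma S2_eq (m k : ℕ) :
    S2 m k = (∑ j ∈ range (k+1), (-1:ℝ)^(k-j) * (k.choose j) * (j:ℝ)^m) / k.factorial := by
  unfold S2
  congr 1
  have hrw : (fun z : ℝ => (Real.exp z - 1)^k) =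
      fun z => ∑ j ∈ range (k+1), ((-1:ℝ)^(k-j) * (k.choose j)) * Real.exp ((j:ℝ)*z) := by
    funext z
    rw [sub_pow]
    refine Finset.sum_congr rfl fun j hj => ?_
    rw [mem_range] at hj
    have hjk : j ≤ k := by omega
    rw [← Real.exp_nat_mul]
    have hs : (-1:ℝ)^(j+k) = (-1:ℝ)^(k-j) := by
      rw [show j + k = (k-j) + 2*j by omega, pow_add, pow_mul]
      simp
    rw [hs]
    ring
  rw [hrw, expsum_ideriv]
  simp

noncomputable def S2e (m k : ℕ) : ℝ :=
  (∑ j ∈ range (k+1), (-1:ℝ)^(k-j) * (k.choose j) * (j:ℝ)^m) / k.factorial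

lemma S2e_zero (m : ℕ) (hm : 1 ≤ m) : S2e m 0 = 0 := by
  unfold S2e
  rw [Finset.sum_range_one]
  simp [zero_pow (by omega : m ≠ 0)]

lemma S2e_zero_zero : S2e 0 0 = 1 := by simp [S2e]

lemma S2e_rec (m k : ℕ) : S2e (m+1) (k+1) = (k+1) * S2e m (k+1) + S2e m k := by
  have hf0 : (k.factorial : ℝ) ≠ 0 := by positivity
  have hf1 : ((k+1).factorial : ℝ) ≠ 0 := by positivity
  have hfac : ((k+1).factorial : ℝ) = (k+1) * k.factorial := by
    push_cast [Nat.factorial_succ]; ring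
  have hmul : ∀ m' k', S2e m' k' * (k'.factorial : ℝ)
      = ∑ j ∈ range (k'+1), (-1:ℝ)^(k'-j) * (k'.choose j) * (j:ℝ)^m' := by
    intro m' k'
    unfold S2e
    field_simp
  have hR : ∑ j ∈ range (k+1+1), (-1:ℝ)^(k-j) * ((k).choose j) * (j:ℝ)^m
      = ∑ j ∈ range (k+1), (-1:ℝ)^(k-j) * ((k).choose j) * (j:ℝ)^m := by
    rw [Finset.sum_range_succ, Nat.choose_succ_self]
    simp
  have key : ∑ j ∈ range (k+1+1), (-1:ℝ)^(k+1-j) * ((k+1).choose j) * (j:ℝ)^(m+1)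
      = (k+1) * ∑ j ∈ range (k+1+1), (-1:ℝ)^(k+1-j) * ((k+1).choose j) * (j:ℝ)^m
        + (k+1) * ∑ j ∈ range (k+1+1), (-1:ℝ)^(k-j) * ((k).choose j) * (j:ℝ)^m := by
    rw [Finset.mul_sum, Finset.mul_sum, ← Finset.sum_add_distrib]
    refine Finset.sum_congr rfl fun j hj => ?_
    rw [mem_range] at hj
    rcases Nat.eq_zero_or_pos j with rfl | hj1
    · rcases Nat.eq_zero_or_pos m with rfl | hm
      · have : (-1:ℝ)^(k+1-0) = -(-1:ℝ)^(k-0) := by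
          simp [pow_succ]
        simp only [this]
        norm_num
      · simp [zero_pow (by omega : m ≠ 0), zero_pow (by omega : m+1 ≠ 0)]
    · rcases Nat.lt_or_ge j (k+1) with hjk | hjk
      · have hjk' : j ≤ k := by omega
        have hsign : (-1:ℝ)^(k+1-j) = -(-1:ℝ)^(k-j) := by
          rw [show k+1-j = (k-j)+1 by omega, pow_succ]; ring
        have hpascal : ((k+1).choose j : ℝ) = (k.choose j : ℝ) + (k.choose (j-1) : ℝ) := by
          rw [show j = (j-1)+1 by omega, Nat.choose_succ_succ]
          push_cast; ring
        have hmul2 : ((k+1) : ℝ) * (k.choose (j-1) : ℝ) = ((k+1).choose j : ℝ) * j := by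
          have h5 := Nat.add_one_mul_choose_eq k (j-1)
          rw [show j - 1 + 1 = j by omega] at h5
          exact_mod_cast h5
        rw [hsign]
        linear_combination (((k:ℝ)+1) * ((-1:ℝ)^(k-j) * (j:ℝ)^m)) * hpascal
          + ((-1:ℝ)^(k-j) * (j:ℝ)^m) * hmul2
      · have hj2 : j = k+1 := by omega
        subst hj2
        simp [Nat.choose_self, Nat.choose_succ_self]
        ring
  apply mul_right_cancel₀ hf1
  rw [hmul, add_mul, mul_assoc, hmul, hfac]
  rw [show S2e m k * (((k:ℝ)+1) * (k.factorial:ℝ)) = ((k:ℝ)+1) * (S2e m k * k.factorial) by ring,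
    hmul, key, hR]

lemma S2e_eq_zero : ∀ {m k : ℕ}, m < k → S2e m k = 0 := by
  intro m
  induction m with
  | zero =>
    intro k hk
    unfold S2e
    rw [div_eq_zero_iff]
    left
    have h1 : ∀ j ∈ range (k+1), (-1:ℝ)^(k-j) * (k.choose j) * (j:ℝ)^0
        = (-1:ℝ)^k * ((-1:ℝ)^j * (k.choose j)) := by
      intro j hj
      rw [mem_range] at hj
      have hk2 : (-1:ℝ)^k = (-1:ℝ)^(k-j) * (-1:ℝ)^j := by
        rw [← pow_add, show k - j + j = k by omega]
      have e2 : (-1:ℝ)^j * (-1:ℝ)^j = 1 := by rw [← mul_pow]; norm_num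
      rw [pow_zero, mul_one, hk2]
      linear_combination (-((k.choose j : ℝ)) * ((-1:ℝ)^(k-j))) * e2
    rw [Finset.sum_congr rfl h1, ← Finset.mul_sum]
    have h2 := congrArg (fun z : ℤ => (z : ℝ)) (Int.alternating_sum_range_choose (n := k))
    push_cast at h2
    rw [h2, if_neg (by omega)]
    ring
  | succ m ih =>
    intro k hk
    obtain ⟨k', rfl⟩ : ∃ k', k = k' + 1 := ⟨k - 1, by omega⟩
    rw [S2e_rec, ih (by omega), ih (by omega)]
    ring

lemma pow_eq_sum_S2e (m : ℕ) (n : ℕ) :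
    (n:ℝ)^m = ∑ k ∈ range (m+1), S2e m k * (n.descFactorial k : ℝ) := by
  induction m with
  | zero => simp [S2e_zero_zero]
  | succ m ih =>
    have hd : ∀ k, (n:ℝ) * (n.descFactorial k:ℝ) =
        (n.descFactorial (k+1):ℝ) + k * (n.descFactorial k:ℝ) := by
      intro k
      rcases le_or_gt k n with h | h
      · rw [Nat.descFactorial_succ, Nat.cast_mul, Nat.cast_sub h]
        ring
      · rw [Nat.descFactorial_of_lt h, Nat.descFactorial_of_lt (by omega)]
        simp
    have step1 : (n:ℝ)^(m+1) = ∑ k ∈ range (m+1),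
        (S2e m k * (n.descFactorial (k+1):ℝ) + (k:ℝ) * S2e m k * (n.descFactorial k:ℝ)) := by
      rw [pow_succ, ih, Finset.sum_mul]
      refine Finset.sum_congr rfl fun k _ => ?_
      linear_combination (S2e m k) * hd k
    rw [step1, Finset.sum_add_distrib]
    have step2 : ∑ k ∈ range (m+1), (k:ℝ) * S2e m k * (n.descFactorial k:ℝ)
        = ∑ k ∈ range (m+1), ((k:ℝ)+1) * S2e m (k+1) * (n.descFactorial (k+1):ℝ) := by
      rw [Finset.sum_range_succ' (fun k => (k:ℝ) * S2e m k * (n.descFactorial k:ℝ)) m]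
      rw [Finset.sum_range_succ (fun k => ((k:ℝ)+1) * S2e m (k+1) * (n.descFactorial (k+1):ℝ)) m]
      rw [S2e_eq_zero (by omega : m < m + 1)]
      push_cast
      simp
    rw [step2, ← Finset.sum_add_distrib]
    have step3 : ∑ k ∈ range (m+1),
        (S2e m k * (n.descFactorial (k+1):ℝ) + ((k:ℝ)+1) * S2e m (k+1) * (n.descFactorial (k+1):ℝ))
        = ∑ k ∈ range (m+1), S2e (m+1) (k+1) * (n.descFactorial (k+1):ℝ) := by
      refine Finset.sum_congr rfl fun k _ => ?_
      rw [S2e_rec]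
      ring
    rw [step3, Finset.sum_range_succ' (fun k => S2e (m+1) k * (n.descFactorial k:ℝ)) (m+1)]
    rw [S2e_zero (m+1) (by omega)]
    simp

lemma dff_succ (β lam : ℝ) (k : ℕ) : dff β lam (k+1) = dff β lam k * (β - k * lam) :=
  Finset.prod_range_succ _ _

lemma factorial_eq_prod (n : ℕ) : (n.factorial : ℝ) = ∏ i ∈ range n, ((i:ℝ)+1) := by
  induction n with
  | zero => simp
  | succ n ih => rw [Finset.prod_range_succ, ← ih, Nat.factorial_succ]; push_cast; ring

noncomputable def Dmaj (a : ℝ) (n : ℕ) : ℝ := ∏ i ∈ range n, ((|a| + i)/((i:ℝ)+1))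

lemma Dmaj_nonneg (a : ℝ) (n : ℕ) : 0 ≤ Dmaj a n :=
  Finset.prod_nonneg fun i _ => by positivity

lemma Dmaj_succ (a : ℝ) (n : ℕ) : Dmaj a (n+1) = Dmaj a n * ((|a| + n)/((n:ℝ)+1)) :=
  Finset.prod_range_succ _ _

lemma abs_c_le (a : ℝ) (n : ℕ) : |dff a 1 n / n.factorial| ≤ Dmaj a n := by
  rw [dff, factorial_eq_prod, ← Finset.prod_div_distrib, Finset.abs_prod]
  apply Finset.prod_le_prod (fun i _ => abs_nonneg _)
  intro i _
  rw [abs_div, abs_of_pos (by positivity : (0:ℝ) < (i:ℝ)+1)]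
  apply div_le_div_of_nonneg_right ?_ (by positivity)
  · calc |a - (i:ℝ)*1| ≤ |a| + |(i:ℝ)*1| := abs_sub _ _
      _ = |a| + i := by simp

lemma summable_Dmaj (a : ℝ) {s : ℝ} (h0 : 0 ≤ s) (h1 : s < 1) :
    Summable (fun n => Dmaj a n * s^n) := by
  set r : ℝ := (1+s)/2 with hr
  have hrs : s < r := by rw [hr]; linarith
  have hr1 : r < 1 := by rw [hr]; linarith
  obtain ⟨N, hN⟩ := exists_nat_ge (|a| / (r - s))
  apply summable_of_ratio_norm_eventually_le hr1
  filter_upwards [eventually_ge_atTop N] with n hn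
  have hDn : 0 ≤ Dmaj a n := Dmaj_nonneg a n
  have hsn : 0 ≤ s^n := by positivity
  rw [Real.norm_eq_abs, Real.norm_eq_abs,
    abs_of_nonneg (mul_nonneg (Dmaj_nonneg a _) (by positivity)),
    abs_of_nonneg (mul_nonneg (Dmaj_nonneg a _) (by positivity)), Dmaj_succ, pow_succ]
  have key : (|a| + n) * s ≤ r * ((n:ℝ)+1) := by
    have h2 : |a| ≤ (N:ℝ) * (r - s) := by
      rw [div_le_iff₀ (by linarith)] at hN
      exact hN
    have h3 : (N:ℝ) ≤ n := by exact_mod_cast hn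
    nlinarith [abs_nonneg a]
  calc Dmaj a n * ((|a| + n)/((n:ℝ)+1)) * (s^n * s)
      = Dmaj a n * s^n * (((|a| + n) * s)/((n:ℝ)+1)) := by ring
    _ ≤ Dmaj a n * s^n * r := by
        apply mul_le_mul_of_nonneg_left ?_ (by positivity)
        rw [div_le_iff₀ (by positivity)]
        nlinarith
    _ = r * (Dmaj a n * s^n) := by ring

lemma summable_nDmaj (a : ℝ) {s : ℝ} (h0 : 0 ≤ s) (h1 : s < 1) :
    Summable (fun n : ℕ => (n:ℝ) * Dmaj a n * s^(n-1)) := by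
  set r : ℝ := (1+s)/2 with hr
  have hrs : s < r := by rw [hr]; linarith
  have hr1 : r < 1 := by rw [hr]; linarith
  obtain ⟨N, hN⟩ := exists_nat_ge (|a| / (r - s))
  apply summable_of_ratio_norm_eventually_le hr1
  filter_upwards [eventually_ge_atTop (N+1)] with n hn
  have hn1 : 1 ≤ n := by omega
  have hDn : 0 ≤ Dmaj a n := Dmaj_nonneg a n
  rw [Real.norm_eq_abs, Real.norm_eq_abs,
    abs_of_nonneg (mul_nonneg (mul_nonneg (by positivity) (Dmaj_nonneg a _)) (by positivity)),
    abs_of_nonneg (mul_nonneg (mul_nonneg (by positivity) (Dmaj_nonneg a _)) (by positivity)),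
    Dmaj_succ]
  have hpow : s^(n+1-1) = s^(n-1) * s := by
    rw [show n+1-1 = (n-1)+1 by omega, pow_succ]
  rw [hpow]
  push_cast
  have key : (|a| + n) * s ≤ r * n := by
    have h2 : |a| ≤ (N:ℝ) * (r - s) := by
      rw [div_le_iff₀ (by linarith)] at hN
      exact hN
    have h3 : (N:ℝ) + 1 ≤ n := by exact_mod_cast hn
    nlinarith [abs_nonneg a]
  have hsn : 0 ≤ s^(n-1) := by positivity
  calc ((n:ℝ)+1) * (Dmaj a n * ((|a| + n)/((n:ℝ)+1))) * (s^(n-1) * s)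
      = Dmaj a n * s^(n-1) * ((|a| + n) * s) := by
        field_simp
    _ ≤ Dmaj a n * s^(n-1) * (r * n) := by
        apply mul_le_mul_of_nonneg_left key (by positivity)
    _ = r * ((n:ℝ) * Dmaj a n * s^(n-1)) := by ring

lemma summable_abs_dff_one (a : ℝ) {y : ℝ} (hy : |y| < 1) :
    Summable (fun n : ℕ => |dff a 1 n / n.factorial * y ^ n|) := by
  refine Summable.of_nonneg_of_le (fun n => abs_nonneg _) (fun n => ?_)
    (summable_Dmaj a (abs_nonneg y) hy)
  rw [abs_mul, abs_pow]
  exact mul_le_mul_of_nonneg_right (abs_c_le a n) (by positivity)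

lemma coeff_rec (a : ℝ) (n : ℕ) :
    ((n:ℝ)+1) * (dff a 1 (n+1) / (n+1).factorial) = (a - n) * (dff a 1 n / n.factorial) := by
  have h1 : dff a 1 (n+1) = dff a 1 n * (a - n) := by rw [dff_succ]; simp
  have h2 : ((n+1).factorial : ℝ) = ((n:ℝ)+1) * n.factorial := by
    rw [Nat.factorial_succ]; push_cast; ring
  have h3 : (n.factorial : ℝ) ≠ 0 := by positivity
  rw [h1, h2]
  field_simp

lemma hasSum_dff_one (a : ℝ) {y : ℝ} (hy : |y| < 1) :
    HasSum (fun n : ℕ => dff a 1 n / n.factorial * y ^ n) ((1+y) ^ a) := by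
  set c : ℕ → ℝ := fun n => dff a 1 n / n.factorial with hc
  set s : ℝ := (1 + |y|)/2 with hs
  have hys : |y| < s := by rw [hs]; linarith
  have hs1 : s < 1 := by rw [hs]; linarith [abs_nonneg y]
  have hs0 : 0 ≤ s := by positivity
  set t : Set ℝ := Set.Ioo (-s) s with ht
  have htO : IsOpen t := isOpen_Ioo
  have htP : IsPreconnected t := isPreconnected_Ioo
  have h0t : (0:ℝ) ∈ t := Set.mem_Ioo.mpr ⟨by linarith [abs_nonneg y], by linarith [abs_nonneg y]⟩
  have hyt : y ∈ t := Set.mem_Ioo.mpr ⟨by linarith [neg_abs_le y], by linarith [le_abs_self y]⟩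
  have hpos : ∀ z ∈ t, (0:ℝ) < 1 + z := by
    intro z hz
    rw [ht, Set.mem_Ioo] at hz
    linarith [hz.1]
  -- derivative data
  have hg : ∀ (n : ℕ) (z : ℝ), HasDerivAt (fun z : ℝ => c n * z^n)
      (c n * ((n:ℝ) * z^(n-1))) z := fun n z => (hasDerivAt_pow n z).const_mul (c n)
  have hu : Summable (fun n : ℕ => (n:ℝ) * Dmaj a n * s^(n-1)) := summable_nDmaj a hs0 hs1
  have hg' : ∀ (n : ℕ) (z : ℝ), z ∈ t → ‖c n * ((n:ℝ) * z^(n-1))‖ ≤ (n:ℝ) * Dmaj a n * s^(n-1) := by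
    intro n z hz
    rw [ht, Set.mem_Ioo] at hz
    have hzs : |z| ≤ s := by
      rw [abs_le]; exact ⟨le_of_lt hz.1, le_of_lt hz.2⟩
    rw [Real.norm_eq_abs, abs_mul, abs_mul, abs_pow, Nat.abs_cast]
    calc |c n| * ((n:ℝ) * |z|^(n-1)) ≤ Dmaj a n * ((n:ℝ) * s^(n-1)) := by
          apply mul_le_mul (abs_c_le a n) ?_ (by positivity) (Dmaj_nonneg a n)
          exact mul_le_mul_of_nonneg_left (pow_le_pow_left₀ (abs_nonneg z) hzs _) (by positivity)
      _ = (n:ℝ) * Dmaj a n * s^(n-1) := by ring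
  have hg0 : Summable (fun n => c n * (0:ℝ)^n) := by
    apply summable_of_ne_finset_zero (s := {0})
    intro n hn
    simp only [Finset.mem_singleton] at hn
    rw [zero_pow hn, mul_zero]
  -- summability on t
  have hsum : ∀ z, |z| < 1 → Summable (fun n => c n * z^n) := by
    intro z hz
    apply Summable.of_norm
    refine Summable.of_nonneg_of_le (fun n => norm_nonneg _) (fun n => ?_)
      (summable_Dmaj a (abs_nonneg z) hz)
    rw [Real.norm_eq_abs, abs_mul, abs_pow]
    exact mul_le_mul_of_nonneg_right (abs_c_le a n) (by positivity)
  set F : ℝ → ℝ := fun z => ∑' n, c n * z^n with hF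
  have hderiv : ∀ z ∈ t, HasDerivAt F (∑' n, c n * ((n:ℝ) * z^(n-1))) z := by
    intro z hz
    exact hasDerivAt_tsum_of_isPreconnected hu htO htP (fun n w _ => hg n w) hg' h0t hg0 hz
  -- the differential equation
  have hDsum : ∀ z ∈ t, Summable (fun n => c n * ((n:ℝ) * z^(n-1))) := by
    intro z hz
    exact Summable.of_norm (Summable.of_nonneg_of_le (fun n => norm_nonneg _)
      (fun n => hg' n z hz) hu)
  have hODE : ∀ z ∈ t, (1+z) * (∑' n, c n * ((n:ℝ) * z^(n-1))) = a * F z := by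
    intro z hz
    have hS := hDsum z hz
    have hz' := hz
    rw [ht, Set.mem_Ioo] at hz'
    have hzs : |z| ≤ s := by rw [abs_le]; exact ⟨le_of_lt hz'.1, le_of_lt hz'.2⟩
    have hSz : Summable (fun n => c n * z^n) := hsum z (lt_of_le_of_lt hzs hs1)
    -- shifted form
    have hshift : Summable (fun n : ℕ => c (n+1) * (((n:ℝ)+1) * z^n)) := by
      have := (summable_nat_add_iff 1).mpr hS
      apply this.congr
      intro n
      simp only [Nat.add_sub_cancel]
      push_cast
      ring
    have hG1 : (∑' n, c n * ((n:ℝ) * z^(n-1))) = ∑' n, c (n+1) * (((n:ℝ)+1) * z^n) := by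
      rw [Summable.tsum_eq_zero_add hS]
      simp only [Nat.cast_zero, zero_mul, mul_zero, zero_add]
      apply tsum_congr
      intro n
      simp only [Nat.add_sub_cancel]
      push_cast
      ring
    have hG2 : (∑' n, c n * ((n:ℝ) * z^(n-1))) = ∑' n, (a - n) * (c n * z^n) := by
      rw [hG1]
      apply tsum_congr
      intro n
      simp only [hc]
      linear_combination (z^n) * coeff_rec a n
    have hzG : z * (∑' n, c n * ((n:ℝ) * z^(n-1))) = ∑' (n:ℕ), (n:ℝ) * (c n * z^n) := by
      rw [← tsum_mul_left]
      apply tsum_congr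
      intro n
      cases n with
      | zero => simp
      | succ k => simp only [Nat.add_sub_cancel]; push_cast; ring
    have hSa : Summable (fun n : ℕ => (a - (n:ℝ)) * (c n * z^n)) := by
      apply hshift.congr
      intro n
      simp only [hc]
      linear_combination (z^n) * coeff_rec a n
    have hSn : Summable (fun n : ℕ => (n:ℝ) * (c n * z^n)) := by
      apply (hS.mul_left z).congr
      intro n
      cases n with
      | zero => simp
      | succ k => simp only [Nat.add_sub_cancel]; push_cast; ring
    calc (1+z) * (∑' n, c n * ((n:ℝ) * z^(n-1)))
        = (∑' n, c n * ((n:ℝ) * z^(n-1))) + z * (∑' n, c n * ((n:ℝ) * z^(n-1))) := by ring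
      _ = (∑' (n:ℕ), (a - (n:ℝ)) * (c n * z^n)) + ∑' (n:ℕ), (n:ℝ) * (c n * z^n) := by rw [hzG, hG2]
      _ = ∑' (n:ℕ), ((a - (n:ℝ)) * (c n * z^n) + (n:ℝ) * (c n * z^n)) := (Summable.tsum_add hSa hSn).symm
      _ = ∑' (n:ℕ), a * (c n * z^n) := by apply tsum_congr; intro n; ring
      _ = a * F z := by rw [tsum_mul_left]
  -- constancy of F z * (1+z)^(-a)
  have hK : ∀ z ∈ t, HasDerivAt (fun w => F w * (1+w)^(-a)) 0 z := by
    intro z hz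
    have hp := hpos z hz
    have hne : (1:ℝ)+z ≠ 0 := ne_of_gt hp
    have h1 : HasDerivAt (fun w:ℝ => 1+w) 1 z := by
      simpa using (hasDerivAt_id z).const_add (1:ℝ)
    have h2 : HasDerivAt (fun w:ℝ => (1+w)^(-a)) (-a * (1+z)^(-a-1)) z := by
      have h2' := h1.rpow_const (p := -a) (Or.inl hne)
      convert h2' using 1
      ring_nf
    have h3 := (hderiv z hz).fun_mul h2
    refine h3.congr_deriv ?_
    have hODEz := hODE z hz
    have hsub : ((1:ℝ)+z)^(-a-1) = (1+z)^(-a) / (1+z) := by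
      rw [Real.rpow_sub hp, Real.rpow_one]
    rw [hsub, div_eq_mul_inv]
    have hinv : ((1:ℝ)+z) * (1+z)⁻¹ = 1 := mul_inv_cancel₀ hne
    linear_combination ((1+z)^(-a) * (1+z)⁻¹) * hODEz
      - ((∑' n, c n * ((n:ℝ) * z^(n-1))) * (1+z)^(-a)) * hinv
  have hconst : F y * (1+y)^(-a) = F 0 * (1+0)^(-a) := by
    apply Convex.is_const_of_fderivWithin_eq_zero (convex_Ioo (-s) s)
      (fun z hz => ((hK z hz).differentiableAt).differentiableWithinAt) ?_ hyt h0t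
    intro z hz
    rw [fderivWithin_of_isOpen htO hz, (hK z hz).hasFDerivAt.fderiv]
    ext w
    simp
  have hF0 : F 0 = 1 := by
    simp only [hF]
    rw [tsum_eq_single 0 (fun n hn => by rw [zero_pow hn, mul_zero])]
    simp [hc, dff]
  have hy1 : (0:ℝ) < 1 + y := hpos y hyt
  have hconst1 : F y * (1+y)^(-a) = 1 := by
    rw [hconst, hF0]
    norm_num
  have h4 : ((1:ℝ)+y)^(-a) * (1+y)^a = 1 := by
    rw [← Real.rpow_add hy1]
    simp
  have hFy : F y = (1+y)^a := by
    calc F y = F y * ((1+y)^(-a) * (1+y)^a) := by rw [h4]; ring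
      _ = (F y * (1+y)^(-a)) * (1+y)^a := by ring
      _ = 1 * (1+y)^a := by rw [hconst1]
      _ = (1+y)^a := one_mul _
  have := (hsum y hy).hasSum
  rw [show (∑' n, c n * y^n) = F y from rfl, hFy] at this
  exact this

lemma dff_scale (b lam : ℝ) (hlam : lam ≠ 0) (n : ℕ) :
    dff b lam n = lam^n * dff (b/lam) 1 n := by
  rw [dff, dff]
  have hl : lam ^ n = ∏ _i ∈ Finset.range n, lam := by
    rw [Finset.prod_const, Finset.card_range]
  rw [hl, ← Finset.prod_mul_distrib]
  refine Finset.prod_congr rfl fun i _ => ?_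
  field_simp

lemma hasSum_dff {lam x : ℝ} (b : ℝ) (hlam : lam ≠ 0) (hx : |lam * x| < 1) :
    HasSum (fun n : ℕ => dff b lam n * x^n / n.factorial) ((1 + lam*x) ^ (b/lam)) := by
  have h := hasSum_dff_one (b/lam) hx
  have he : (fun n : ℕ => dff b lam n * x^n / n.factorial)
      = fun n : ℕ => dff (b/lam) 1 n / n.factorial * (lam*x)^n := by
    funext n
    rw [dff_scale b lam hlam, mul_pow]
    ring
  rw [he]
  exact h

lemma summable_abs_dff {lam x : ℝ} (b : ℝ) (hlam : lam ≠ 0) (hx : |lam * x| < 1) :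
    Summable (fun n : ℕ => |dff b lam n * x^n / n.factorial|) := by
  have h := summable_abs_dff_one (b/lam) hx
  have he : (fun n : ℕ => |dff b lam n * x^n / n.factorial|)
      = fun n : ℕ => |dff (b/lam) 1 n / n.factorial * (lam*x)^n| := by
    funext n
    rw [dff_scale b lam hlam, mul_pow]
    congr 1
    ring
  rw [he]
  exact h

lemma dff_split (β lam : ℝ) (k j : ℕ) :
    dff β lam (k+j) = dff β lam k * dff (β - k*lam) lam j := by
  rw [dff, dff, dff, Finset.prod_range_add]
  congr 1
  refine Finset.prod_congr rfl fun i _ => ?_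
  push_cast
  ring

lemma shifted_term (β lam x : ℝ) (k j : ℕ) :
    ((j+k).descFactorial k : ℝ) * dff β lam (j+k) * x^(j+k) / (j+k).factorial
      = (x^k * dff β lam k) * (dff (β - k*lam) lam j * x^j / j.factorial) := by
  have hd : ((j+k).descFactorial k : ℝ) * j.factorial = ((j+k).factorial : ℝ) := by
    rw [Nat.descFactorial_eq_factorial_mul_choose]
    push_cast
    rw [← Nat.add_choose_mul_factorial_mul_factorial j k]
    push_cast
    ring
  have hj : (j.factorial : ℝ) ≠ 0 := by positivity
  have hjk : ((j+k).factorial : ℝ) ≠ 0 := by positivity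
  have h1 : dff β lam (j+k) = dff β lam k * dff (β - k*lam) lam j := by
    rw [Nat.add_comm]; exact dff_split β lam k j
  have h2 : x^(j+k) = x^j * x^k := pow_add x j k
  rw [h1, h2]
  field_simp
  linear_combination (x^k * dff β lam k * (dff (β - (k:ℝ)*lam) lam j) * x^j) * hd

lemma hasSum_desc {lam β x : ℝ} (hlam : lam ≠ 0) (hx : |lam * x| < 1) (k : ℕ) :
    HasSum (fun n : ℕ => (n.descFactorial k : ℝ) * dff β lam n * x^n / n.factorial)
      (x^k * dff β lam k * (1 + lam*x) ^ (β/lam - k)) := by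
  set f : ℕ → ℝ := fun n => (n.descFactorial k : ℝ) * dff β lam n * x^n / n.factorial with hf
  have hvan : ∀ i ∈ range k, f i = 0 := by
    intro i hi
    rw [mem_range] at hi
    simp only [hf, Nat.descFactorial_of_lt hi]
    simp
  have hexp : (β - k*lam)/lam = β/lam - k := by field_simp
  have hshift : HasSum (fun j : ℕ => f (j + k))
      (x^k * dff β lam k * (1 + lam*x) ^ (β/lam - k)) := by
    have h := (hasSum_dff (β - k*lam) hlam hx).mul_left (x^k * dff β lam k)
    rw [hexp] at h
    have he : (fun j : ℕ => f (j + k))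
        = fun j => x^k * dff β lam k * (dff (β - k*lam) lam j * x^j / j.factorial) := by
      funext j
      simp only [hf]
      exact shifted_term β lam x k j
    rw [he]
    exact h
  have := (hasSum_nat_add_iff k).mp hshift
  rwa [Finset.sum_eq_zero hvan, add_zero] at this

lemma summable_abs_desc {lam β x : ℝ} (hlam : lam ≠ 0) (hx : |lam * x| < 1) (k : ℕ) :
    Summable (fun n : ℕ => |(n.descFactorial k : ℝ) * dff β lam n * x^n / n.factorial|) := by
  rw [← summable_nat_add_iff k]
  have he : (fun j : ℕ => |((j+k).descFactorial k : ℝ) * dff β lam (j+k) * x^(j+k) / (j+k).factorial|)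
      = fun j : ℕ => |x^k * dff β lam k| * |dff (β - k*lam) lam j * x^j / j.factorial| := by
    funext j
    rw [shifted_term β lam x k j, abs_mul]
  rw [he]
  exact (summable_abs_dff (β - k*lam) hlam hx).mul_left _

lemma S2_eq_S2e (m k : ℕ) : S2 m k = S2e m k := by
  rw [S2_eq]; rfl

theorem stmt4 (lam β x : ℝ) (m : ℕ) (hlam : lam ≠ 0) (hm : 1 ≤ m)
    (hx : |lam * x| < 1) (hx' : 0 < 1 + lam * x) :
    Summable (fun n : ℕ => |(n : ℝ) ^ m * dff β lam n * x ^ n / n.factorial|) ∧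
    ∑' n : ℕ, (n : ℝ) ^ m * dff β lam n * x ^ n / n.factorial
      = ∑ k ∈ Finset.Icc 1 m,
          S2 m k * x ^ k * dff β lam k * (1 + lam * x) ^ (β / lam - k) := by
  have hpt : ∀ n : ℕ, (n:ℝ)^m * dff β lam n * x^n / n.factorial
      = ∑ k ∈ range (m+1),
          S2 m k * ((n.descFactorial k:ℝ) * dff β lam n * x^n / n.factorial) := by
    intro n
    calc (n:ℝ)^m * dff β lam n * x^n / n.factorial
        = (∑ k ∈ range (m+1), S2e m k * (n.descFactorial k : ℝ)) * dff β lam n * x^n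
            / n.factorial := by rw [← pow_eq_sum_S2e]
      _ = ∑ k ∈ range (m+1),
            S2 m k * ((n.descFactorial k:ℝ) * dff β lam n * x^n / n.factorial) := by
          rw [Finset.sum_mul, Finset.sum_mul, Finset.sum_div]
          refine Finset.sum_congr rfl fun k _ => ?_
          rw [S2_eq_S2e]
          ring
  have hsumk : ∀ k ∈ range (m+1), Summable (fun n : ℕ =>
      |S2 m k * ((n.descFactorial k:ℝ) * dff β lam n * x^n / n.factorial)|) := by
    intro k _
    simp only [abs_mul]
    exact (summable_abs_desc hlam hx k).mul_left _
  have habs : Summable (fun n : ℕ => |(n:ℝ)^m * dff β lam n * x^n / n.factorial|) := by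
    refine Summable.of_nonneg_of_le (fun n => abs_nonneg _) (fun n => ?_) (summable_sum hsumk)
    rw [hpt n]
    exact Finset.abs_sum_le_sum_abs _ _
  refine ⟨habs, ?_⟩
  have hhs : HasSum (fun n : ℕ => ∑ k ∈ range (m+1),
        S2 m k * ((n.descFactorial k:ℝ) * dff β lam n * x^n / n.factorial))
      (∑ k ∈ range (m+1), S2 m k * (x^k * dff β lam k * (1+lam*x)^(β/lam - (k:ℝ)))) :=
    hasSum_sum (fun k _ => (hasSum_desc hlam hx k).mul_left (S2 m k))
  rw [show (fun n : ℕ => ∑ k ∈ range (m+1),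
        S2 m k * ((n.descFactorial k:ℝ) * dff β lam n * x^n / n.factorial))
      = fun n : ℕ => (n:ℝ)^m * dff β lam n * x^n / n.factorial
      from funext fun n => (hpt n).symm] at hhs
  rw [hhs.tsum_eq]
  have hins : range (m+1) = insert 0 (Finset.Icc 1 m) := by
    ext j
    simp only [Finset.mem_range, Finset.mem_insert, Finset.mem_Icc]
    omega
  rw [hins, Finset.sum_insert (by simp)]
  have h0 : S2 m 0 * (x^0 * dff β lam 0 * (1+lam*x)^(β/lam - ((0:ℕ):ℝ))) = 0 := by
    rw [S2_eq_S2e, S2e_zero m hm]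
    ring
  rw [h0, zero_add]
  refine Finset.sum_congr rfl fun k hk => ?_
  ring
end

section
/- For every n ∈ ℕ and every real x, K^{(β)}_{n,λ}(x) = Σ_{m=0}^n (ϖ(m,n)/m!) · P^{(β)}_{m,λ}(x). -/
open Finset

/-- degenerate Krawtchouk Appell polynomials -/
noncomputable def K (lam β q r : ℝ) (n : ℕ) (x : ℝ) : ℝ :=
  iteratedDeriv n
    (fun t : ℝ => ((1 + t) / (1 + q * t)) ^ x *
      (1 + lam * r * Real.log (1 + q * t)) ^ (-β / lam)) 0

/-- degenerate Appell polynomials -/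
noncomputable def P (lam β p q r : ℝ) (n : ℕ) (x : ℝ) : ℝ :=
  iteratedDeriv n
    (fun z : ℝ => Real.exp (x * z) *
      (1 + lam * r * Real.log (p / (1 - q * Real.exp z))) ^ (-β / lam)) 0

/-- `m`-tuples of positive integers summing to `n` -/
def tuples (m n : ℕ) : Finset (Fin m → ℕ) :=
  (Fintype.piFinset fun _ : Fin m => Finset.Icc 1 n).filter fun i => ∑ j : Fin m, i j = n

noncomputable def varpi (q : ℝ) (m n : ℕ) : ℝ :=
  ∑ i ∈ tuples m n,
    (-1 : ℝ) ^ (n + m) * n.factorial * ∏ j : Fin m, (1 - q ^ (i j)) / ((i j : ℕ) : ℝ)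

section Aux

open Filter Topology

/-- Taylor coefficients of `t ↦ log ((1+t)/(1+qt))` at `0`. -/
noncomputable def gcoef (q : ℝ) : ℕ → ℝ
  | 0 => 0
  | (k+1) => (-1 : ℝ) ^ k * (1 - q ^ (k+1)) / (k+1)

noncomputable def gseries (q : ℝ) : FormalMultilinearSeries ℝ ℝ ℝ :=
  fun k => ContinuousMultilinearMap.mkPiRing ℝ (Fin k) (gcoef q k)

lemma gseries_coeff (q : ℝ) (k : ℕ) : (gseries q).coeff k = gcoef q k := by
  simp [gseries, FormalMultilinearSeries.coeff, ContinuousMultilinearMap.mkPiRing_apply]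

noncomputable def gfun (q t : ℝ) : ℝ := Real.log ((1 + t) / (1 + q * t))

noncomputable def Afun (lam β p q r x z : ℝ) : ℝ :=
  Real.exp (x * z) *
    (1 + lam * r * Real.log (p / (1 - q * Real.exp z))) ^ (-β / lam)

lemma hasFPS_g {q : ℝ} (hq0 : 0 ≤ q) (hq1 : q < 1) :
    HasFPowerSeriesAt (gfun q) (gseries q) 0 := by
  rw [hasFPowerSeriesAt_iff]
  filter_upwards [Metric.ball_mem_nhds (0:ℝ) one_pos] with z hz
  rw [Metric.mem_ball, dist_zero_right, Real.norm_eq_abs] at hz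
  have hzlt := abs_lt.mp hz
  have hqz : |q * z| < 1 := by
    rw [abs_mul, abs_of_nonneg hq0]
    nlinarith [abs_nonneg z, abs_lt.mp hz]
  have hqzlt := abs_lt.mp hqz
  have hz1 : (0:ℝ) < 1 + z := by linarith [hzlt.1]
  have hqz1 : (0:ℝ) < 1 + q * z := by linarith [hqzlt.1]
  have h1 := Real.hasSum_pow_div_log_of_abs_lt_one (x := -z) (by rwa [abs_neg])
  have h2 := Real.hasSum_pow_div_log_of_abs_lt_one (x := -(q * z)) (by rwa [abs_neg])
  have key : HasSum (fun k : ℕ => z ^ (k+1) • (gseries q).coeff (k+1))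
      (gfun q (0 + z)) := by
    have hsub := h2.sub h1
    convert hsub using 1
    · rfl
    · funext k
      rw [gseries_coeff]
      show z ^ (k+1) * ((-1:ℝ) ^ k * (1 - q ^ (k+1)) / (↑k+1)) = _
      ring
    · rw [zero_add, gfun, sub_neg_eq_add, sub_neg_eq_add,
        Real.log_div hz1.ne' hqz1.ne']
      ring
  have := (hasSum_nat_add_iff (f := fun k : ℕ => z ^ k • (gseries q).coeff k) 1).mp key
  simpa [gseries_coeff, gcoef] using this

lemma analyticAt_log1p_comp {f : ℝ → ℝ} {x : ℝ} (hf : AnalyticAt ℝ f x) (hfx : f x = 1) :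
    AnalyticAt ℝ (fun z => Real.log (f z)) x := by
  have h0 : AnalyticAt ℝ (gfun 0) 0 := (hasFPS_g le_rfl one_pos).analyticAt
  have h1 : AnalyticAt ℝ (fun z => f z - 1) x := hf.sub analyticAt_const
  have h2 : AnalyticAt ℝ (gfun 0 ∘ fun z => f z - 1) x := by
    apply AnalyticAt.comp _ h1
    simp [hfx]
    exact h0
  apply h2.congr
  filter_upwards with z
  show Real.log ((1 + (f z - 1)) / (1 + 0 * (f z - 1))) = Real.log (f z)
  norm_num

lemma analyticAt_A {lam β p q r : ℝ} (x : ℝ) (hp : 0 < p) (hq : q = 1 - p) :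
    AnalyticAt ℝ (Afun lam β p q r x) 0 := by
  have hden : (1:ℝ) - q * Real.exp 0 ≠ 0 := by
    rw [Real.exp_zero, hq]; simp; linarith
  have hH : AnalyticAt ℝ (fun z => p / (1 - q * Real.exp z)) 0 :=
    analyticAt_const.div (analyticAt_const.sub (analyticAt_const.mul analyticAt_rexp)) hden
  have hH0 : p / (1 - q * Real.exp 0) = 1 := by
    rw [Real.exp_zero, hq]; simp [sub_sub_cancel, hp.ne']
  have hL : AnalyticAt ℝ (fun z => Real.log (p / (1 - q * Real.exp z))) 0 :=
    analyticAt_log1p_comp hH hH0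
  have hu : AnalyticAt ℝ (fun z => 1 + lam * r * Real.log (p / (1 - q * Real.exp z))) 0 :=
    analyticAt_const.add (analyticAt_const.mul hL)
  have hu0 : (1 : ℝ) + lam * r * Real.log (p / (1 - q * Real.exp 0)) = 1 := by
    rw [hH0, Real.log_one]; ring
  have hlogu : AnalyticAt ℝ
      (fun z => Real.log (1 + lam * r * Real.log (p / (1 - q * Real.exp z)))) 0 :=
    analyticAt_log1p_comp hu hu0
  have hB : AnalyticAt ℝ (fun z => Real.exp (x * z) *
      Real.exp (Real.log (1 + lam * r * Real.log (p / (1 - q * Real.exp z))) * (-β / lam))) 0 :=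
    (analyticAt_rexp.comp (analyticAt_const.mul analyticAt_id)).mul
      (analyticAt_rexp.comp (hlogu.mul analyticAt_const))
  apply hB.congr
  have hupos : ∀ᶠ z in 𝓝 (0:ℝ),
      0 < 1 + lam * r * Real.log (p / (1 - q * Real.exp z)) := by
    have hc : ContinuousAt (fun z => 1 + lam * r * Real.log (p / (1 - q * Real.exp z))) 0 :=
      hu.continuousAt
    have : (0:ℝ) < 1 + lam * r * Real.log (p / (1 - q * Real.exp 0)) := by
      rw [hu0]; norm_num
    exact hc.eventually (eventually_gt_nhds this)
  filter_upwards [hupos] with z hz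
  rw [Afun, Real.rpow_def_of_pos hz]

lemma iteratedDeriv_eq_coeff {f : ℝ → ℝ} {pp : FormalMultilinearSeries ℝ ℝ ℝ}
    (h : HasFPowerSeriesAt f pp 0) (n : ℕ) :
    iteratedDeriv n f 0 = n.factorial * pp.coeff n := by
  obtain ⟨R, hR⟩ := h
  have := hR.factorial_smul (1:ℝ) n
  rw [iteratedDeriv_eq_iteratedFDeriv, ← this, FormalMultilinearSeries.coeff]
  simp [nsmul_eq_mul]

lemma gcoef_eq (q : ℝ) {k : ℕ} (hk : 1 ≤ k) :
    gcoef q k = (-1 : ℝ) ^ (k + 1) * ((1 - q ^ k) / (k : ℝ)) := by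
  obtain ⟨k', rfl⟩ : ∃ k', k = k' + 1 := ⟨k - 1, by omega⟩
  show (-1 : ℝ) ^ k' * (1 - q ^ (k'+1)) / ((k':ℝ)+1) = _
  push_cast
  ring

lemma key_comb (q : ℝ) (n m : ℕ) :
    ∑ c ∈ Finset.univ.filter (fun c : Composition n => c.length = m),
        ((n.factorial : ℝ) * ∏ i, gcoef q (c.blocksFun i))
      = varpi q m n := by
  rw [varpi]
  refine Finset.sum_bij'
    (i := fun c hc => fun j : Fin m =>
      c.blocksFun (Fin.cast ((Finset.mem_filter.mp hc).2).symm j))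
    (j := fun a ha =>
      (⟨List.ofFn a, by
          intro i hi
          rw [List.mem_ofFn] at hi
          obtain ⟨j, rfl⟩ := hi
          have h1 := (Finset.mem_filter.mp ha).1
          rw [Fintype.mem_piFinset] at h1
          have := Finset.mem_Icc.mp (h1 j)
          omega, by
          rw [List.sum_ofFn]
          exact (Finset.mem_filter.mp ha).2⟩ : Composition n))
    ?_ ?_ ?_ ?_ ?_
  · -- maps to tuples
    intro c hc
    have hlen := (Finset.mem_filter.mp hc).2
    rw [tuples, Finset.mem_filter]
    constructor
    · rw [Fintype.mem_piFinset]
      intro j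
      rw [Finset.mem_Icc]
      exact ⟨c.one_le_blocksFun _, c.blocksFun_le _⟩
    · exact (Fintype.sum_equiv (finCongr hlen.symm) _ _ (fun j => rfl)).trans
        c.sum_blocksFun
  · -- maps back
    intro a ha
    rw [Finset.mem_filter]
    refine ⟨Finset.mem_univ _, ?_⟩
    show (List.ofFn a).length = m
    simp
  · -- left inverse
    intro c hc
    have hlen := (Finset.mem_filter.mp hc).2
    ext1
    dsimp only
    rw [← c.ofFn_blocksFun]
    exact (List.ofFn_congr hlen c.blocksFun).symm
  · -- right inverse
    intro a ha
    funext j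
    simp only [Composition.blocksFun, List.get_ofFn]
    congr 1
  · -- values agree
    intro c hc
    have hlen := (Finset.mem_filter.mp hc).2
    have hprod : (∏ i, gcoef q (c.blocksFun i))
        = ∏ j : Fin m, gcoef q (c.blocksFun (Fin.cast hlen.symm j)) :=
      Fintype.prod_equiv (finCongr hlen) _ _ (fun i => by congr 1)
    rw [hprod]
    have hone : ∀ j : Fin m, 1 ≤ c.blocksFun (Fin.cast hlen.symm j) :=
      fun j => c.one_le_blocksFun _
    have hsum : ∑ j : Fin m, c.blocksFun (Fin.cast hlen.symm j) = n :=
      (Fintype.sum_equiv (finCongr hlen.symm) _ _ (fun j => rfl)).trans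
        c.sum_blocksFun
    calc (n.factorial : ℝ) * ∏ j : Fin m, gcoef q (c.blocksFun (Fin.cast hlen.symm j))
        = (n.factorial : ℝ) * ∏ j : Fin m,
            ((-1 : ℝ) ^ (c.blocksFun (Fin.cast hlen.symm j) + 1) *
              ((1 - q ^ (c.blocksFun (Fin.cast hlen.symm j))) /
                ((c.blocksFun (Fin.cast hlen.symm j) : ℝ)))) := by
          congr 1
          exact Finset.prod_congr rfl fun j _ => gcoef_eq q (hone j)
      _ = (-1 : ℝ) ^ (n + m) * n.factorial * ∏ j : Fin m,
            (1 - q ^ (c.blocksFun (Fin.cast hlen.symm j))) /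
              ((c.blocksFun (Fin.cast hlen.symm j) : ℝ)) := by
          rw [Finset.prod_mul_distrib, Finset.prod_pow_eq_pow_sum]
          have : ∑ j : Fin m, (c.blocksFun (Fin.cast hlen.symm j) + 1) = n + m := by
            rw [Finset.sum_add_distrib, hsum]
            simp
          rw [this]
          ring

end Aux

theorem stmt6 (lam β p q r : ℝ) (hlam : lam < 0) (hβ : 0 < β)
    (hp : 0 < p) (hp1 : p < 1) (hq : q = 1 - p) (hr : 0 < r) (n : ℕ) (x : ℝ) :
    K lam β q r n x
      = ∑ m ∈ Finset.range (n + 1),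
          varpi q m n / m.factorial * P lam β p q r m x := by
  subst hq
  have hq0 : (0:ℝ) ≤ 1 - p := by linarith
  have hq1 : (1:ℝ) - p < 1 := by linarith
  obtain ⟨pA, hpA⟩ := analyticAt_A (lam := lam) (β := β) (r := r) x hp rfl
  have hg := hasFPS_g hq0 hq1
  have hg0 : gfun (1-p) 0 = 0 := by simp [gfun]
  have hcomp : HasFPowerSeriesAt (Afun lam β p (1-p) r x ∘ gfun (1-p))
      (pA.comp (gseries (1-p))) 0 := by
    refine HasFPowerSeriesAt.comp ?_ hg
    rwa [hg0]
  have hK : K lam β (1-p) r n x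
      = iteratedDeriv n (Afun lam β p (1-p) r x ∘ gfun (1-p)) 0 := by
    unfold K
    refine Filter.EventuallyEq.iteratedDeriv_eq n ?_
    filter_upwards [Metric.ball_mem_nhds (0:ℝ) one_pos] with t ht
    rw [Metric.mem_ball, dist_zero_right, Real.norm_eq_abs] at ht
    have htl := abs_lt.mp ht
    have h1t : (0:ℝ) < 1 + t := by linarith [htl.1]
    have hqt : (0:ℝ) < 1 + (1-p)*t := by nlinarith [htl.1, htl.2]
    have hw : (0:ℝ) < (1+t)/(1+(1-p)*t) := div_pos h1t hqt
    show _ = Afun lam β p (1-p) r x (gfun (1-p) t)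
    rw [Afun, gfun, Real.exp_log hw]
    have hden : 1 - (1-p) * ((1+t)/(1+(1-p)*t)) = p / (1+(1-p)*t) := by
      field_simp
      ring
    rw [hden]
    have hpp : p / (p / (1+(1-p)*t)) = 1+(1-p)*t := by
      rw [div_div_eq_mul_div, mul_comm p, mul_div_assoc, div_self (ne_of_gt hp), mul_one]
    rw [hpp, Real.rpow_def_of_pos hw, mul_comm x]
  rw [hK, iteratedDeriv_eq_coeff hcomp]
  have hco : (pA.comp (gseries (1-p))).coeff n
      = ∑ c : Composition n, (∏ i, gcoef (1-p) (c.blocksFun i)) * pA.coeff c.length := by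
    have hdef : (pA.comp (gseries (1-p))) n
        = ∑ c : Composition n, pA.compAlongComposition (gseries (1-p)) c := rfl
    rw [FormalMultilinearSeries.coeff, hdef, ContinuousMultilinearMap.sum_apply]
    refine Finset.sum_congr rfl fun c _ => ?_
    rw [FormalMultilinearSeries.compAlongComposition_apply,
      FormalMultilinearSeries.apply_eq_prod_smul_coeff, smul_eq_mul]
    congr 1
    refine Finset.prod_congr rfl fun i _ => ?_
    simp [FormalMultilinearSeries.applyComposition, gseries,
      ContinuousMultilinearMap.mkPiRing_apply, Function.comp]
  rw [hco, Finset.mul_sum]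
  rw [← Finset.sum_fiberwise_of_maps_to
    (g := fun c : Composition n => c.length) (t := Finset.range (n+1))
    (fun c _ => Finset.mem_range.mpr (Nat.lt_succ_of_le c.length_le)) _]
  refine Finset.sum_congr rfl fun m hm => ?_
  have hP : P lam β p (1-p) r m x = m.factorial * pA.coeff m := iteratedDeriv_eq_coeff hpA m
  have hm0 : (m.factorial : ℝ) ≠ 0 := Nat.cast_ne_zero.mpr m.factorial_ne_zero
  rw [hP]
  have hrhs : varpi (1-p) m n / m.factorial * (m.factorial * pA.coeff m)
      = varpi (1-p) m n * pA.coeff m := by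
    field_simp
  rw [hrhs, ← key_comb (1-p) n m, Finset.sum_mul]
  refine Finset.sum_congr rfl fun c hc => ?_
  have h2 : pA.coeff c.length = pA.coeff m := by rw [(Finset.mem_filter.mp hc).2]
  rw [h2]
  ring
end

section
/- For every n ∈ ℕ and all real x, y, K^{(β)}_{n,λ}(x + y) = Σ_{k+l+m=n} (n!/(k! l! m!)) · K^{(β)}_{k,λ}(x) · K^{(β)}_{l,λ}(y) · g_m, the sum over all triples (k,l,m) of nonnegative integers with k + l + m = n. -/
open Finset Topology

lemma auxdiff {f : ℝ → ℝ} {s : Set ℝ} (hs : IsOpen s)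
    (hf : ContDiffOn ℝ (⊤ : ℕ∞) f s) (k : ℕ) {x : ℝ} (hx : x ∈ s) :
    DifferentiableAt ℝ (iteratedDeriv k f) x := by
  have h1 : Set.EqOn (iteratedDerivWithin k f s) (iteratedDeriv k f) s := by
    intro y hy
    rw [iteratedDerivWithin, iteratedDeriv, iteratedFDerivWithin_of_isOpen k hs hy]
  have h2 : DifferentiableOn ℝ (iteratedDerivWithin k f s) s :=
    hf.differentiableOn_iteratedDerivWithin (by exact_mod_cast WithTop.coe_lt_top k) hs.uniqueDiffOn
  have h3 : DifferentiableAt ℝ (iteratedDerivWithin k f s) x :=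
    (h2 x hx).differentiableAt (hs.mem_nhds hx)
  refine h3.congr_of_eventuallyEq ?_
  filter_upwards [hs.mem_nhds hx] with y hy using (h1 hy).symm

lemma leibniz {f g : ℝ → ℝ} {s : Set ℝ} (hs : IsOpen s)
    (hf : ContDiffOn ℝ (⊤ : ℕ∞) f s) (hg : ContDiffOn ℝ (⊤ : ℕ∞) g s) (n : ℕ) :
    ∀ x ∈ s, iteratedDeriv n (fun t => f t * g t) x
      = ∑ kl ∈ Finset.HasAntidiagonal.antidiagonal n,
          (n.choose kl.1 : ℝ) * (iteratedDeriv kl.1 f x * iteratedDeriv kl.2 g x) := by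
  induction n with
  | zero => intro x hx; simp
  | succ n ih =>
    intro x hx
    have hev : iteratedDeriv n (fun t => f t * g t)
        =ᶠ[𝓝 x] fun y => ∑ kl ∈ Finset.HasAntidiagonal.antidiagonal n,
          (n.choose kl.1 : ℝ) * (iteratedDeriv kl.1 f y * iteratedDeriv kl.2 g y) := by
      filter_upwards [hs.mem_nhds hx] with y hy using ih y hy
    rw [iteratedDeriv_succ, hev.deriv_eq]
    have hdiff : ∀ kl ∈ Finset.HasAntidiagonal.antidiagonal n, DifferentiableAt ℝ
        (fun y => (n.choose kl.1 : ℝ) * (iteratedDeriv kl.1 f y * iteratedDeriv kl.2 g y)) x :=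
      fun kl _ => (((auxdiff hs hf kl.1 hx).mul (auxdiff hs hg kl.2 hx)).const_mul _)
    rw [deriv_fun_sum hdiff]
    have hterm : ∀ kl ∈ Finset.HasAntidiagonal.antidiagonal n, deriv
        (fun y => (n.choose kl.1 : ℝ) * (iteratedDeriv kl.1 f y * iteratedDeriv kl.2 g y)) x
        = (n.choose kl.1 : ℝ) * (iteratedDeriv (kl.1+1) f x * iteratedDeriv kl.2 g x
            + iteratedDeriv kl.1 f x * iteratedDeriv (kl.2+1) g x) := by
      intro kl _
      rw [deriv_const_mul (d := fun y => iteratedDeriv kl.1 f y * iteratedDeriv kl.2 g y) _ ((auxdiff hs hf kl.1 hx).mul (auxdiff hs hg kl.2 hx)),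
        deriv_fun_mul (auxdiff hs hf kl.1 hx) (auxdiff hs hg kl.2 hx),
        ← iteratedDeriv_succ, ← iteratedDeriv_succ]
    rw [Finset.sum_congr rfl hterm]
    -- combinatorial identity
    set a : ℕ → ℝ := fun k => iteratedDeriv k f x
    set b : ℕ → ℝ := fun k => iteratedDeriv k g x
    have h2 : ∑ kl ∈ Finset.HasAntidiagonal.antidiagonal n, (n.choose kl.1 : ℝ) * (a kl.1 * b (kl.2+1))
        = ∑ kl ∈ Finset.HasAntidiagonal.antidiagonal (n+1), (n.choose kl.1 : ℝ) * (a kl.1 * b kl.2) := by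
      rw [Finset.Nat.sum_antidiagonal_succ'
        (f := fun kl => (n.choose kl.1 : ℝ) * (a kl.1 * b kl.2))]
      simp [Nat.choose_succ_self]
    simp only [a, b] at h2
    simp only [mul_add, Finset.sum_add_distrib, h2]
    rw [Finset.Nat.sum_antidiagonal_succ
        (f := fun kl => (n.choose kl.1 : ℝ) * (a kl.1 * b kl.2)),
      Finset.Nat.sum_antidiagonal_succ
        (f := fun kl => ((n+1).choose kl.1 : ℝ) * (a kl.1 * b kl.2))]
    simp only [Nat.choose_succ_succ, Nat.cast_add, Nat.choose_zero_right, Nat.cast_one]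
    have h3 : ∀ kl ∈ Finset.HasAntidiagonal.antidiagonal n,
        ((n.choose kl.1 : ℝ) + (n.choose kl.1.succ : ℝ)) * (a (kl.1+1) * b kl.2)
        = (n.choose kl.1 : ℝ) * (a (kl.1+1) * b kl.2)
            + (n.choose (kl.1+1) : ℝ) * (a (kl.1+1) * b kl.2) := by
      intro kl _; rw [Nat.succ_eq_add_one]; ring
    rw [Finset.sum_congr rfl h3, Finset.sum_add_distrib]
    show (∑ kl ∈ Finset.HasAntidiagonal.antidiagonal n, (n.choose kl.1 : ℝ) * (a (kl.1+1) * b kl.2)) + _ = _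
    ring


/-- derivatives at 0 of the Laplace transform composed with `log(1+qt)` -/
noncomputable def gg (lam β q r : ℝ) (m : ℕ) : ℝ :=
  iteratedDeriv m (fun t : ℝ => (1 + lam * r * Real.log (1 + q * t)) ^ (β / lam)) 0

theorem stmt8 (lam β p q r : ℝ) (hlam : lam < 0) (hβ : 0 < β)
    (hp : 0 < p) (hp1 : p < 1) (hq : q = 1 - p) (hr : 0 < r) (n : ℕ) (x y : ℝ) :
    K lam β q r n (x + y)
      = ∑ kl ∈ Finset.HasAntidiagonal.antidiagonal n, ∑ lm ∈ Finset.HasAntidiagonal.antidiagonal kl.2,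
          (n.factorial : ℝ) /
              (kl.1.factorial * lm.1.factorial * lm.2.factorial) *
            K lam β q r kl.1 x * K lam β q r lm.1 y * gg lam β q r lm.2 := by

  set s : Set ℝ := {t : ℝ | 0 < 1 + t ∧ 0 < 1 + q * t ∧
      0 < 1 + lam * r * Real.log (1 + q * t)} with hsdef
  have h1 : IsOpen {t : ℝ | 0 < 1 + t} :=
    isOpen_lt continuous_const (by fun_prop)
  have h2 : IsOpen {t : ℝ | 0 < 1 + q * t} :=
    isOpen_lt continuous_const (by fun_prop)
  have hs0 : IsOpen {t : ℝ | 0 < 1 + t ∧ 0 < 1 + q * t} := by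
    convert h1.inter h2 using 1
    rfl
  have hcont : ContinuousOn (fun t : ℝ => 1 + lam * r * Real.log (1 + q * t))
      {t : ℝ | 0 < 1 + t ∧ 0 < 1 + q * t} := by
    intro t ht
    have hlog : ContinuousAt (fun u : ℝ => Real.log (1 + q * u)) t :=
      ContinuousAt.comp (f := fun u : ℝ => 1 + q * u)
        (Real.continuousAt_log (ne_of_gt ht.2)) (by fun_prop)
    exact (continuousAt_const.add (continuousAt_const.mul hlog)).continuousWithinAt
  have hopen : IsOpen s := by
    have := hcont.isOpen_inter_preimage hs0 (isOpen_Ioi (a := (0:ℝ)))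
    convert this using 1
    ext t; simp [hsdef, Set.mem_setOf_eq, and_assoc]
  have h0s : (0:ℝ) ∈ s := by simp [hsdef]
  -- smoothness on s
  have hmem : ∀ t ∈ s, 0 < 1 + t ∧ 0 < 1 + q * t ∧
      0 < 1 + lam * r * Real.log (1 + q * t) := fun t ht => ht
  have hbase : ∀ t ∈ s, ContDiffAt ℝ (⊤ : ℕ∞) (fun u : ℝ => (1 + u) / (1 + q * u)) t := by
    intro t ht
    exact ContDiffAt.div (by fun_prop) (by fun_prop) (ne_of_gt (hmem t ht).2.1)
  have hlogS : ∀ t ∈ s, ContDiffAt ℝ (⊤ : ℕ∞)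
      (fun u : ℝ => 1 + lam * r * Real.log (1 + q * u)) t := by
    intro t ht
    have hl : ContDiffAt ℝ (⊤ : ℕ∞) (fun u : ℝ => Real.log (1 + q * u)) t :=
      ContDiffAt.log (by fun_prop) (ne_of_gt (hmem t ht).2.1)
    exact contDiffAt_const.add (contDiffAt_const.mul hl)
  have hHs : ContDiffOn ℝ (⊤ : ℕ∞)
      (fun t : ℝ => (1 + lam * r * Real.log (1 + q * t)) ^ (β / lam)) s :=
    fun t ht => ((hlogS t ht).rpow_const_of_ne (ne_of_gt (hmem t ht).2.2)).contDiffWithinAt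
  have hP : ∀ z c : ℝ, ContDiffOn ℝ (⊤ : ℕ∞)
      (fun t : ℝ => ((1 + t) / (1 + q * t)) ^ z
        * (1 + lam * r * Real.log (1 + q * t)) ^ c) s := by
    intro z c t ht
    have hd := hmem t ht
    have ha := (hbase t ht).rpow_const_of_ne (p := z) (ne_of_gt (div_pos hd.1 hd.2.1))
    have hb := (hlogS t ht).rpow_const_of_ne (p := c) (ne_of_gt hd.2.2)
    exact (ha.mul hb).contDiffWithinAt
  -- the three factor functions
  set Fx : ℝ → ℝ := fun t => ((1 + t) / (1 + q * t)) ^ x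
    * (1 + lam * r * Real.log (1 + q * t)) ^ (-β / lam) with hFx
  set Fy : ℝ → ℝ := fun t => ((1 + t) / (1 + q * t)) ^ y
    * (1 + lam * r * Real.log (1 + q * t)) ^ (-β / lam) with hFy
  set H : ℝ → ℝ := fun t => (1 + lam * r * Real.log (1 + q * t)) ^ (β / lam) with hH
  set G : ℝ → ℝ := fun t => Fy t * H t with hG
  have hGs : ContDiffOn ℝ (⊤ : ℕ∞) G s := (hP y (-β / lam)).mul hHs
  have hkey : ∀ t ∈ s, ((1 + t) / (1 + q * t)) ^ (x + y)
      * (1 + lam * r * Real.log (1 + q * t)) ^ (-β / lam) = Fx t * G t := by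
    intro t ht
    have hd := hmem t ht
    have ha : (0:ℝ) < (1 + t) / (1 + q * t) := div_pos hd.1 hd.2.1
    have hb := hd.2.2
    have hbb : (1 + lam * r * Real.log (1 + q * t)) ^ (-β / lam)
        * (1 + lam * r * Real.log (1 + q * t)) ^ (β / lam) = 1 := by
      rw [← Real.rpow_add hb]
      simp [neg_div]
    rw [Real.rpow_add ha]
    simp only [hFx, hFy, hH, hG]
    linear_combination -(((1 + t) / (1 + q * t)) ^ x * ((1 + t) / (1 + q * t)) ^ y
      * (1 + lam * r * Real.log (1 + q * t)) ^ (-β / lam)) * hbb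
  have e1 : K lam β q r n (x + y) = iteratedDeriv n (fun t => Fx t * G t) 0 := by
    apply Filter.EventuallyEq.iteratedDeriv_eq
    filter_upwards [hopen.mem_nhds h0s] with t ht using hkey t ht
  rw [e1, leibniz hopen (hP x (-β / lam)) hGs n 0 h0s]
  refine Finset.sum_congr rfl fun kl hkl => ?_
  have hkn : kl.1 + kl.2 = n := Finset.HasAntidiagonal.mem_antidiagonal.mp hkl
  rw [hG, leibniz hopen (hP y (-β / lam)) hHs kl.2 0 h0s]
  simp only [Finset.mul_sum]
  refine Finset.sum_congr rfl fun lm hlm => ?_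
  have hlj : lm.1 + lm.2 = kl.2 := Finset.HasAntidiagonal.mem_antidiagonal.mp hlm
  have hc : ((n.choose kl.1 : ℕ) : ℝ) * ((kl.2.choose lm.1 : ℕ) : ℝ)
      = (n.factorial : ℝ) / (kl.1.factorial * lm.1.factorial * lm.2.factorial) := by
    rw [Nat.cast_choose ℝ (by omega : kl.1 ≤ n),
      Nat.cast_choose ℝ (by omega : lm.1 ≤ kl.2),
      (by omega : n - kl.1 = kl.2), (by omega : kl.2 - lm.1 = lm.2)]
    have f1 : (kl.1.factorial : ℝ) ≠ 0 := Nat.cast_ne_zero.mpr kl.1.factorial_ne_zero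
    have f2 : (kl.2.factorial : ℝ) ≠ 0 := Nat.cast_ne_zero.mpr kl.2.factorial_ne_zero
    have f3 : (lm.1.factorial : ℝ) ≠ 0 := Nat.cast_ne_zero.mpr lm.1.factorial_ne_zero
    have f4 : (lm.2.factorial : ℝ) ≠ 0 := Nat.cast_ne_zero.mpr lm.2.factorial_ne_zero
    field_simp
  have hKx : K lam β q r kl.1 x = iteratedDeriv kl.1 Fx 0 := rfl
  have hKy : K lam β q r lm.1 y = iteratedDeriv lm.1 Fy 0 := rfl
  have hgg : gg lam β q r lm.2 = iteratedDeriv lm.2 H 0 := rfl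
  rw [hKx, hKy, hgg, ← hc]
  ring
end

section
/- Let k ≥ 1 be an integer. For every n ∈ ℕ, the n-th derivative at z = 0 of z ↦ ((e^z − 1)/(1 − q e^z))^k equals Σ_{j=k}^n C(j−1, k−1) · (q^{j−k}/p^j) · j! · S(n,j) (in particular it vanishes for n < k). Equivalently, ((e^z − 1)/(1 − q e^z))^k = Σ_{n≥k} [ Σ_{j=k}^n C(j−1,k−1) (q^{j−k}/p^j) j! S(n,j) ] z^n/n! for real z near 0. -/
open Finset

open Real Topology

lemma itdW_eq {f : ℝ → ℝ} {U : Set ℝ} (hU : IsOpen U) {x : ℝ} (hx : x ∈ U) (n : ℕ) :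
    iteratedDerivWithin n f U x = iteratedDeriv n f x := by
  rw [iteratedDerivWithin_eq_iteratedFDerivWithin, iteratedDeriv_eq_iteratedFDeriv,
    iteratedFDerivWithin_of_isOpen n hU hx]

lemma itd_add {U : Set ℝ} (hU : IsOpen U) {x : ℝ} (hx : x ∈ U) {f g : ℝ → ℝ}
    (hf : ContDiffOn ℝ (⊤ : ℕ∞) f U) (hg : ContDiffOn ℝ (⊤ : ℕ∞) g U) (n : ℕ) :
    iteratedDeriv n (fun z => f z + g z) x = iteratedDeriv n f x + iteratedDeriv n g x := by
  have h := iteratedDerivWithin_add hx hU.uniqueDiffOn (n := n)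
    ((hf.contDiffWithinAt hx).of_le (by exact_mod_cast (le_top : (n:ℕ∞) ≤ ⊤)))
    ((hg.contDiffWithinAt hx).of_le (by exact_mod_cast (le_top : (n:ℕ∞) ≤ ⊤)))
  rw [itdW_eq hU hx, itdW_eq hU hx, itdW_eq hU hx] at h
  simpa [Pi.add_def] using h

lemma itd_cmul {U : Set ℝ} (hU : IsOpen U) {x : ℝ} (hx : x ∈ U) {f : ℝ → ℝ} (c : ℝ)
    (hf : ContDiffOn ℝ (⊤ : ℕ∞) f U) (n : ℕ) :
    iteratedDeriv n (fun z => c * f z) x = c * iteratedDeriv n f x := by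
  have h := iteratedDerivWithin_const_mul hx hU.uniqueDiffOn (n := n) c
    ((hf.contDiffWithinAt hx).of_le (by exact_mod_cast (le_top : (n:ℕ∞) ≤ ⊤)))
  rw [itdW_eq hU hx, itdW_eq hU hx] at h
  exact h

lemma lemD (p q : ℝ) (hp : 0 < p) :
    ∀ (j k m : ℕ), 1 ≤ m →
    iteratedDeriv j (fun v : ℝ => v ^ k * ((p - q * v) ^ m)⁻¹) 0 =
      if k ≤ j then (j.choose k : ℝ) * k.factorial * q ^ (j - k) * (m.ascFactorial (j - k)) /
        p ^ (m + (j - k)) else 0 := by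
  have hUo : IsOpen {v : ℝ | p - q * v ≠ 0} :=
    isOpen_ne.preimage (by fun_prop)
  have hU0 : (0 : ℝ) ∈ {v : ℝ | p - q * v ≠ 0} := by
    simp [hp.ne']
  have hsm : ∀ k m : ℕ, ContDiffOn ℝ (⊤ : ℕ∞)
      (fun v : ℝ => v ^ k * ((p - q * v) ^ m)⁻¹) {v : ℝ | p - q * v ≠ 0} := by
    intro k m
    apply ContDiffOn.mul (by fun_prop)
    exact ((contDiff_const.sub (contDiff_const.mul contDiff_id)).pow m).contDiffOn.inv
      (fun x hx => pow_ne_zero _ hx)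
  intro j
  induction j with
  | zero =>
    intro k m hm
    rcases Nat.eq_zero_or_pos k with rfl | hk
    · simp [Nat.ascFactorial]
    · simp [iteratedDeriv_zero, zero_pow (by omega : k ≠ 0), Nat.not_le.mpr (by omega : 0 < k)]
  | succ j IH =>
    intro k m hm
    rw [iteratedDeriv_succ']
    have hEv : deriv (fun v : ℝ => v ^ k * ((p - q * v) ^ m)⁻¹) =ᶠ[𝓝 (0:ℝ)]
        fun v => (k : ℝ) * (v ^ (k-1) * ((p - q * v) ^ m)⁻¹)
          + ((m : ℝ) * q) * (v ^ k * ((p - q * v) ^ (m+1))⁻¹) := by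
      filter_upwards [hUo.mem_nhds hU0] with v hv
      have hw : p - q * v ≠ 0 := hv
      have h1 : HasDerivAt (fun v : ℝ => p - q * v) (-q) v := by
        simpa using ((hasDerivAt_id v).const_mul q).const_sub p
      have h2 := h1.pow m
      have h3 := h2.inv (pow_ne_zero m hw)
      have h4 : HasDerivAt (fun v : ℝ => v ^ k) ((k:ℝ) * v ^ (k-1)) v := hasDerivAt_pow k v
      have h5 := h4.mul h3
      simp only [Pi.inv_apply, Pi.pow_apply] at h5
      rw [show (fun v : ℝ => v ^ k * ((p - q * v) ^ m)⁻¹)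
        = (fun v : ℝ => v ^ k) * ((fun v : ℝ => p - q * v) ^ m)⁻¹ from rfl, h5.deriv]
      obtain ⟨m', rfl⟩ : ∃ m', m = m' + 1 := ⟨m - 1, by omega⟩
      have hne : (p - q * v) ^ (m' + 1) ≠ 0 := pow_ne_zero _ hw
      simp only [Nat.add_sub_cancel]
      field_simp
      ring
    rw [hEv.iteratedDeriv_eq]
    rw [itd_add hUo hU0 (contDiffOn_const.mul (hsm (k-1) m)) (contDiffOn_const.mul (hsm k (m+1))),
      itd_cmul hUo hU0 _ (hsm (k-1) m), itd_cmul hUo hU0 _ (hsm k (m+1)),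
      IH (k-1) m hm, IH k (m+1) (by omega)]
    rcases Nat.eq_zero_or_pos k with rfl | hk
    · -- k = 0
      simp only [Nat.zero_sub, Nat.le_zero, Nat.cast_zero, zero_mul, zero_add,
        if_pos (Nat.zero_le j), if_pos (Nat.zero_le (j+1)), Nat.sub_zero]
      have hasc : ((m+1).ascFactorial j : ℝ) * m = (m.ascFactorial (j+1) : ℝ) := by
        have := Nat.succ_ascFactorial m j
        have h2 : m.ascFactorial (j+1) = (m + j) * m.ascFactorial j := Nat.ascFactorial_succ
        push_cast [h2, ← this]
        ring
      rw [Nat.choose_zero_right, Nat.choose_zero_right]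
      push_cast [← hasc]
      rw [show m + 1 + j = m + (j+1) by ring]
      field_simp
      ring
    rcases Nat.lt_or_ge (j+1) k with hgt | hle
    · -- k > j + 1 : everything vanishes
      rw [if_neg (by omega), if_neg (by omega), if_neg (by omega)]
      ring
    · -- 1 ≤ k ≤ j+1
      obtain ⟨k', rfl⟩ : ∃ k', k = k' + 1 := ⟨k - 1, by omega⟩
      rw [if_pos hle, if_pos (by omega : k' + 1 - 1 ≤ j)]
      rcases Nat.lt_or_ge j (k' + 1) with hkj | hkj
      · -- k = j+1
        obtain rfl : j = k' := by omega
        rw [if_neg (by omega)]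
        have h0 : j - (j + 1 - 1) = 0 := by omega
        have h0' : j + 1 - (j + 1) = 0 := by omega
        rw [h0, h0']
        simp only [Nat.ascFactorial_zero, Nat.add_sub_cancel, Nat.choose_self, pow_zero,
          Nat.add_zero, Nat.cast_one, mul_one, Nat.factorial_succ]
        push_cast
        ring
      · -- k ≤ j
        rw [if_pos (by omega : k' + 1 ≤ j)]
        set d := j - (k' + 1) with hd
        have e1 : j - (k' + 1 - 1) = d + 1 := by omega
        have e2 : j + 1 - (k' + 1) = d + 1 := by omega
        have e3 : m + 1 + (j - (k' + 1)) = m + (d + 1) := by omega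
        rw [e1, e2, e3]
        have f1 : m * (m+1).ascFactorial d = m.ascFactorial (d+1) := by
          rw [Nat.ascFactorial_succ, ← Nat.succ_ascFactorial]
        have key : (k'+1) * (j.choose k' * k'.factorial * m.ascFactorial (d+1))
            + j.choose (k'+1) * (k'+1).factorial * (m * (m+1).ascFactorial d)
            = (j+1).choose (k'+1) * (k'+1).factorial * m.ascFactorial (d+1) := by
          rw [f1, Nat.choose_succ_succ, Nat.factorial_succ]; ring
        have hpne : (p : ℝ) ^ (m + (d+1)) ≠ 0 := pow_ne_zero _ hp.ne'
        have keyR : ((k':ℝ)+1) * (j.choose k' * k'.factorial * m.ascFactorial (d+1))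
            + j.choose (k'+1) * (k'+1).factorial * (m * (m+1).ascFactorial d)
            = (j+1).choose (k'+1) * (k'+1).factorial * m.ascFactorial (d+1) := by
          exact_mod_cast congrArg (Nat.cast : ℕ → ℝ) key
        simp only [Nat.add_sub_cancel]
        field_simp
        linear_combination (norm := skip) (q:ℝ)^(d+1) * keyR
        push_cast; ring

lemma choose_fact_asc (j k : ℕ) (hk : 1 ≤ k) (hkj : k ≤ j) :
    j.choose k * k.factorial * k.ascFactorial (j - k) = (j-1).choose (k-1) * j.factorial := by
  have h1 : (k-1).factorial * k.ascFactorial (j-k) = (j-1).factorial := by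
    rw [Nat.factorial_mul_ascFactorial' k (j-k) (by omega)]
    congr 1; omega
  have h2 : j.choose k * k.factorial * (j-k).factorial = j.factorial :=
    Nat.choose_mul_factorial_mul_factorial hkj
  have h3 : (j-1).choose (k-1) * (k-1).factorial * ((j-1)-(k-1)).factorial = (j-1).factorial :=
    Nat.choose_mul_factorial_mul_factorial (by omega)
  have h4 : (j-1) - (k-1) = j - k := by omega
  rw [h4] at h3
  have hpos : 0 < (k-1).factorial * (j-k).factorial :=
    Nat.mul_pos (Nat.factorial_pos _) (Nat.factorial_pos _)
  apply Nat.eq_of_mul_eq_mul_right hpos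
  calc j.choose k * k.factorial * k.ascFactorial (j - k) * ((k-1).factorial * (j-k).factorial)
      = (j.choose k * k.factorial * (j-k).factorial) * ((k-1).factorial * k.ascFactorial (j-k)) :=
        by ring
    _ = j.factorial * (j-1).factorial := by rw [h1, h2]
    _ = (j-1).choose (k-1) * j.factorial * ((k-1).factorial * (j-k).factorial) := by
        rw [← h3]; ring

lemma lemB (p q : ℝ) (hp : 0 < p) (hq : q = 1 - p) (k : ℕ) (hk : 1 ≤ k) (j : ℕ) :
    iteratedDeriv j (fun w : ℝ => ((w - 1) / (1 - q * w)) ^ k) 1 =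
      if k ≤ j then ((j-1).choose (k-1) : ℝ) * q ^ (j - k) * j.factorial / p ^ j else 0 := by
  have h1 := congrFun (iteratedDeriv_comp_const_add j
    (fun w : ℝ => ((w - 1) / (1 - q * w)) ^ k) 1) 0
  norm_num at h1
  rw [← h1]
  have h2 : (fun v : ℝ => (v / (1 - q * (1 + v))) ^ k)
      = fun v : ℝ => v ^ k * ((p - q * v) ^ k)⁻¹ := by
    funext v
    have hd : 1 - q * (1 + v) = p - q * v := by rw [hq]; ring
    rw [hd, div_pow, div_eq_mul_inv]
  rw [h2, lemD p q hp j k k hk]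
  rcases Nat.lt_or_ge j k with h | h
  · rw [if_neg (by omega), if_neg (by omega)]
  · rw [if_pos h, if_pos h]
    have key := choose_fact_asc j k hk h
    have e : k + (j - k) = j := by omega
    rw [e]
    have keyR : (j.choose k : ℝ) * k.factorial * k.ascFactorial (j - k)
        = ((j-1).choose (k-1) : ℝ) * j.factorial := by exact_mod_cast congrArg (Nat.cast : ℕ → ℝ) key
    field_simp
    linear_combination (q:ℝ)^(j-k) * keyR

noncomputable def T (n j : ℕ) : ℝ := iteratedDeriv n (fun z : ℝ => (Real.exp z - 1) ^ j) 0

lemma contDiff_X (j : ℕ) : ContDiff ℝ (⊤ : ℕ∞) (fun z : ℝ => (Real.exp z - 1) ^ j) :=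
  (Real.contDiff_exp.sub contDiff_const).pow j

lemma derivX (j : ℕ) : deriv (fun z : ℝ => (Real.exp z - 1) ^ (j+1))
    = fun z => ((j:ℝ)+1) * (Real.exp z - 1) ^ (j+1) + ((j:ℝ)+1) * (Real.exp z - 1) ^ j := by
  funext z
  have h : HasDerivAt (fun z : ℝ => (Real.exp z - 1) ^ (j+1))
      (((j:ℝ)+1) * (Real.exp z - 1) ^ j * Real.exp z) z := by
    have h' := ((Real.hasDerivAt_exp z).sub_const 1).pow (j+1)
    simp only [Nat.cast_add, Nat.cast_one, Nat.add_sub_cancel] at h'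
    exact h'
  rw [h.deriv]
  have : Real.exp z = (Real.exp z - 1) + 1 := by ring
  rw [this]
  ring

lemma T_rec (n j : ℕ) : T (n+1) (j+1) = ((j:ℝ)+1) * T n (j+1) + ((j:ℝ)+1) * T n j := by
  unfold T
  rw [iteratedDeriv_succ', derivX j]
  rw [itd_add isOpen_univ (Set.mem_univ (0:ℝ))
    (contDiffOn_const.mul (contDiff_X (j+1)).contDiffOn)
    (contDiffOn_const.mul (contDiff_X j).contDiffOn),
    itd_cmul isOpen_univ (Set.mem_univ (0:ℝ)) _ (contDiff_X (j+1)).contDiffOn,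
    itd_cmul isOpen_univ (Set.mem_univ (0:ℝ)) _ (contDiff_X j).contDiffOn]

lemma T_vanish : ∀ n j : ℕ, n < j → T n j = 0 := by
  intro n
  induction n with
  | zero =>
    intro j hj
    obtain ⟨j', rfl⟩ : ∃ j', j = j' + 1 := ⟨j - 1, by omega⟩
    simp [T, iteratedDeriv_zero]
  | succ n IH =>
    intro j hj
    obtain ⟨j', rfl⟩ : ∃ j', j = j' + 1 := ⟨j - 1, by omega⟩
    rw [T_rec, IH (j'+1) (by omega), IH j' (by omega)]
    ring

lemma S2_eq_s11 (n j : ℕ) : S2 n j = T n j / j.factorial := rfl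

lemma S2_zero_zero : S2 0 0 = 1 := by
  simp [S2, iteratedDeriv_zero]

lemma S2_succ_zero (n : ℕ) : S2 (n+1) 0 = 0 := by
  have : (fun z : ℝ => (Real.exp z - 1) ^ 0) = fun _ : ℝ => (1:ℝ) := by
    funext z; simp
  have hz : iteratedDeriv (n+1) (fun _ : ℝ => (1:ℝ)) 0 = 0 := by
    rw [iteratedDeriv_succ']
    have : deriv (fun _ : ℝ => (1:ℝ)) = fun _ : ℝ => (0:ℝ) := by
      funext x; simp
    rw [this]
    induction n with
    | zero => simp
    | succ m IH =>
      rw [iteratedDeriv_succ']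
      have : deriv (fun _ : ℝ => (0:ℝ)) = fun _ : ℝ => (0:ℝ) := by funext x; simp
      rw [this]
      exact IH
  simp [S2, this, hz]

lemma S2_vanish (n j : ℕ) (h : n < j) : S2 n j = 0 := by
  rw [S2_eq_s11, T_vanish n j h, zero_div]

lemma S2_rec (n j : ℕ) : S2 (n+1) (j+1) = ((j:ℝ)+1) * S2 n (j+1) + S2 n j := by
  rw [S2_eq_s11, S2_eq_s11, S2_eq_s11, T_rec]
  have hx : (j.factorial : ℝ) ≠ 0 := Nat.cast_ne_zero.mpr j.factorial_ne_zero
  have hc : ((j:ℝ)+1) ≠ 0 := by positivity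
  have hy : ((j+1).factorial : ℝ) = ((j:ℝ)+1) * j.factorial := by
    rw [Nat.factorial_succ]; push_cast; ring
  rw [hy]
  field_simp

lemma lemC : ∀ (j : ℕ) (F : ℝ → ℝ) (U : Set ℝ), IsOpen U → (1:ℝ) ∈ U →
    ContDiffOn ℝ (⊤ : ℕ∞) F U →
    iteratedDeriv j (fun w => w * F w) 1
      = iteratedDeriv j F 1 + (j:ℝ) * iteratedDeriv (j-1) F 1 := by
  intro j
  induction j with
  | zero =>
    intro F U hU h1 hF
    simp [iteratedDeriv_zero]
  | succ j IH =>
    intro F U hU h1 hF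
    have hF' : ContDiffOn ℝ (⊤ : ℕ∞) (deriv F) U := by
      apply hF.deriv_of_isOpen hU
      exact le_rfl
    have hEv : deriv (fun w => w * F w) =ᶠ[𝓝 (1:ℝ)]
        fun w => F w + w * deriv F w := by
      filter_upwards [hU.mem_nhds h1] with w hw
      have hd : DifferentiableAt ℝ F w :=
        (hF.contDiffAt (hU.mem_nhds hw)).differentiableAt (by simp)
      rw [deriv_fun_mul differentiableAt_fun_id hd]
      simp
    rw [iteratedDeriv_succ', hEv.iteratedDeriv_eq,
      itd_add hU h1 hF (show ContDiffOn ℝ (⊤ : ℕ∞) (fun w : ℝ => w * deriv F w) U from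
        contDiffOn_id.mul hF'),
      IH (deriv F) U hU h1 hF']
    rw [← iteratedDeriv_succ']
    rcases Nat.eq_zero_or_pos j with rfl | hj
    · push_cast; ring
    · have e : j - 1 + 1 = j := by omega
      rw [show iteratedDeriv (j-1) (deriv F) 1 = iteratedDeriv j F 1 by
        rw [← iteratedDeriv_succ', e]]
      have e2 : j + 1 - 1 = j := by omega
      rw [e2]
      push_cast; ring

lemma lemA : ∀ (n : ℕ) (G : ℝ → ℝ) (U : Set ℝ), IsOpen U → (1:ℝ) ∈ U →
    ContDiffOn ℝ (⊤ : ℕ∞) G U →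
    iteratedDeriv n (fun z => G (Real.exp z)) 0
      = ∑ j ∈ Finset.range (n+1), S2 n j * iteratedDeriv j G 1 := by
  intro n
  induction n with
  | zero =>
    intro G U hU h1 hG
    simp [iteratedDeriv_zero, S2_zero_zero]
  | succ n IH =>
    intro G U hU h1 hG
    have hG' : ContDiffOn ℝ (⊤ : ℕ∞) (deriv G) U := hG.deriv_of_isOpen hU le_rfl
    have hH : ContDiffOn ℝ (⊤ : ℕ∞) (fun w => w * deriv G w) U :=
      contDiffOn_id.mul hG'
    have hV : IsOpen (Real.exp ⁻¹' U) := hU.preimage Real.continuous_exp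
    have h0V : (0:ℝ) ∈ Real.exp ⁻¹' U := by simpa [Real.exp_zero] using h1
    have hEv : deriv (fun z => G (Real.exp z)) =ᶠ[𝓝 (0:ℝ)]
        fun z => (fun w => w * deriv G w) (Real.exp z) := by
      filter_upwards [hV.mem_nhds h0V] with z hz
      have hd : DifferentiableAt ℝ G (Real.exp z) :=
        (hG.contDiffAt (hU.mem_nhds hz)).differentiableAt (by simp)
      have := (hd.hasDerivAt.comp z (Real.hasDerivAt_exp z)).deriv
      rw [Function.comp_def] at this
      rw [this]
      ring
    rw [iteratedDeriv_succ', hEv.iteratedDeriv_eq, IH _ U hU h1 hH]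
    have hterm : ∀ j : ℕ, iteratedDeriv j (fun w => w * deriv G w) 1
        = iteratedDeriv (j+1) G 1 + (j:ℝ) * iteratedDeriv j G 1 := by
      intro j
      rw [lemC j (deriv G) U hU h1 hG', ← iteratedDeriv_succ']
      rcases Nat.eq_zero_or_pos j with rfl | hj
      · push_cast; ring
      · have e : j - 1 + 1 = j := by omega
        rw [show iteratedDeriv (j-1) (deriv G) 1 = iteratedDeriv j G 1 by
          rw [← iteratedDeriv_succ', e]]
    calc ∑ j ∈ Finset.range (n+1), S2 n j * iteratedDeriv j (fun w => w * deriv G w) 1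
        = ∑ j ∈ Finset.range (n+1),
            (S2 n j * iteratedDeriv (j+1) G 1 + (j:ℝ) * S2 n j * iteratedDeriv j G 1) := by
          apply Finset.sum_congr rfl
          intro j _
          rw [hterm j]; ring
      _ = ∑ j ∈ Finset.range (n+1), S2 n j * iteratedDeriv (j+1) G 1
          + ∑ j ∈ Finset.range (n+1), (j:ℝ) * S2 n j * iteratedDeriv j G 1 :=
          Finset.sum_add_distrib
      _ = ∑ j ∈ Finset.range (n+2), S2 (n+1) j * iteratedDeriv j G 1 := by
          rw [Finset.sum_range_succ' (fun j => S2 (n+1) j * iteratedDeriv j G 1) (n+1)]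
          rw [S2_succ_zero]
          have hrec : ∀ j : ℕ, S2 (n+1) (j+1) * iteratedDeriv (j+1) G 1
              = S2 n j * iteratedDeriv (j+1) G 1
                + ((j:ℝ)+1) * S2 n (j+1) * iteratedDeriv (j+1) G 1 := by
            intro j
            rw [S2_rec]; ring
          rw [Finset.sum_congr rfl (fun j _ => hrec j), Finset.sum_add_distrib]
          set g : ℕ → ℝ := fun j => (j:ℝ) * S2 n j * iteratedDeriv j G 1 with hg
          have e2 : ∑ i ∈ Finset.range (n+1), g (i+1) + g 0
              = ∑ i ∈ Finset.range (n+1), g i + g (n+1) := by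
            rw [← Finset.sum_range_succ', Finset.sum_range_succ]
          have hg0 : g 0 = 0 := by simp [hg]
          have hgn : g (n+1) = 0 := by
            simp [hg, S2_vanish n (n+1) (by omega)]
          have h2 : ∑ j ∈ Finset.range (n+1), ((j:ℝ)+1) * S2 n (j+1) * iteratedDeriv (j+1) G 1
              = ∑ j ∈ Finset.range (n+1), g j := by
            calc ∑ j ∈ Finset.range (n+1), ((j:ℝ)+1) * S2 n (j+1) * iteratedDeriv (j+1) G 1
                = ∑ i ∈ Finset.range (n+1), g (i+1) := by
                  apply Finset.sum_congr rfl
                  intro i _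
                  simp only [hg]
                  push_cast
                  ring
              _ = ∑ j ∈ Finset.range (n+1), g j := by
                  have := e2
                  rw [hg0, hgn] at this
                  linarith
          rw [h2]
          ring

theorem stmt11 (p q : ℝ) (hp : 0 < p) (hp1 : p < 1) (hq : q = 1 - p)
    (k : ℕ) (hk : 1 ≤ k) (n : ℕ) :
    iteratedDeriv n (fun z : ℝ => ((Real.exp z - 1) / (1 - q * Real.exp z)) ^ k) 0
      = ∑ j ∈ Finset.Icc k n,
          ((j - 1).choose (k - 1) : ℝ) * (q ^ (j - k) / p ^ j) *
            j.factorial * S2 n j := by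
  have hUo : IsOpen {w : ℝ | 1 - q * w ≠ 0} := isOpen_ne.preimage (by fun_prop)
  have hU1 : (1:ℝ) ∈ {w : ℝ | 1 - q * w ≠ 0} := by
    simp only [Set.mem_setOf_eq, hq]
    intro h
    nlinarith
  have hG : ContDiffOn ℝ (⊤ : ℕ∞) (fun w : ℝ => ((w - 1) / (1 - q * w)) ^ k)
      {w : ℝ | 1 - q * w ≠ 0} := by
    apply ContDiffOn.pow
    exact ContDiffOn.div (by fun_prop) (by fun_prop) (fun x hx => hx)
  have hL := lemA n (fun w : ℝ => ((w - 1) / (1 - q * w)) ^ k) _ hUo hU1 hG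
  rw [show (fun z : ℝ => ((Real.exp z - 1) / (1 - q * Real.exp z)) ^ k)
    = fun z : ℝ => ((Real.exp z - 1) / (1 - q * Real.exp z)) ^ k from rfl]
  rw [hL]
  have hB : ∀ j : ℕ, iteratedDeriv j (fun w : ℝ => ((w - 1) / (1 - q * w)) ^ k) 1
      = if k ≤ j then ((j-1).choose (k-1) : ℝ) * q ^ (j - k) * j.factorial / p ^ j else 0 :=
    lemB p q hp hq k hk
  calc ∑ j ∈ Finset.range (n+1), S2 n j * iteratedDeriv j
        (fun w : ℝ => ((w - 1) / (1 - q * w)) ^ k) 1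
      = ∑ j ∈ Finset.range (n+1), (if k ≤ j then
          S2 n j * (((j-1).choose (k-1) : ℝ) * q ^ (j - k) * j.factorial / p ^ j) else 0) := by
        apply Finset.sum_congr rfl
        intro j _
        rw [hB j]
        split_ifs <;> simp
    _ = ∑ j ∈ (Finset.range (n+1)).filter (fun j => k ≤ j),
          S2 n j * (((j-1).choose (k-1) : ℝ) * q ^ (j - k) * j.factorial / p ^ j) :=
        (Finset.sum_filter _ _).symm
    _ = ∑ j ∈ Finset.Icc k n,
          ((j - 1).choose (k - 1) : ℝ) * (q ^ (j - k) / p ^ j) * j.factorial * S2 n j := by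
        have hset : (Finset.range (n+1)).filter (fun j => k ≤ j) = Finset.Icc k n := by
          ext a
          simp [Nat.lt_succ_iff, and_comm]
        rw [hset]
        apply Finset.sum_congr rfl
        intro j _
        ring
end
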